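/- Let T ≥ 1 and N ≥ 1, let α_1,…,α_T be nonnegative real numbers, let p_1,…,p_T ∈ [0,1], and let δ_1,…,δ_T be independent random variables taking values in {0,1} with P(δ_t = 1) = p_t. For each n ∈ {1,…,N}, let A_n and B_n be disjoint subsets with A_n ∪ B_n = {1,…,T}, let γ_n ≥ 0, and define D_n = Σ_{t∈A_n} α_t δ_t − Σ_{t∈B_n} α_t δ_t. Then for every s > 0, (1/N) Σ_{n=1}^N P(D_n > γ_n/2) ≤ ((1/N) Σ_{n=1}^N exp(−s·γ_n/2)) · exp(Σ_{t=1}^T (e^{sα_t} − 1) p_t). -/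

import Mathlib

open MeasureTheory Finset ProbabilityTheory

/-- Averaged Chernoff bound (Theorem 2): the empirical mismatch probability
over `N` data points, the `n`-th with margin `γ n ≥ 0`, is at most
`((1/N) ∑ n, exp(-sγ n/2)) * exp(∑ t, (e^{sα t} - 1) p t)` for every `s > 0`. -/
theorem chernoff_bound_averaged {Ω : Type*} [MeasurableSpace Ω]
    (P : Measure Ω) [IsProbabilityMeasure P]
    {T N : ℕ} (hT : 1 ≤ T) (hN : 1 ≤ N)
    (α p : Fin T → ℝ) (hα : ∀ t, 0 ≤ α t)
    (hp0 : ∀ t, 0 ≤ p t) (hp1 : ∀ t, p t ≤ 1)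
    (δ : Fin T → Ω → ℝ) (hmeas : ∀ t, Measurable (δ t))
    (hval : ∀ t ω, δ t ω = 0 ∨ δ t ω = 1)
    (hP : ∀ t, (P {ω | δ t ω = 1}).toReal = p t)
    (hind : iIndepFun δ P)
    (A B : Fin N → Finset (Fin T))
    (hdisj : ∀ n, Disjoint (A n) (B n)) (hunion : ∀ n, A n ∪ B n = univ)
    (γ : Fin N → ℝ) (hγ : ∀ n, 0 ≤ γ n)
    (s : ℝ) (hs : 0 < s) :
    (1 / (N : ℝ)) * ∑ n,
        (P {ω | γ n / 2 < ∑ t ∈ A n, α t * δ t ω - ∑ t ∈ B n, α t * δ t ω}).toReal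
      ≤ ((1 / (N : ℝ)) * ∑ n, Real.exp (-(s * γ n / 2)))
          * Real.exp (∑ t, (Real.exp (s * α t) - 1) * p t) := by
  classical
  -- integral of δ t is p t
  have hδint : ∀ t, Integrable (δ t) P := by
    intro t
    refine (integrable_const (1 : ℝ)).mono' (hmeas t).aestronglyMeasurable ?_
    refine Filter.Eventually.of_forall fun ω => ?_
    rcases hval t ω with h | h <;> simp [h]
  have hδexp : ∀ t, ∫ ω, δ t ω ∂P = p t := by
    intro t
    have hset : MeasurableSet {ω | δ t ω = 1} := (hmeas t) (measurableSet_singleton 1)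
    have heq : δ t = Set.indicator {ω | δ t ω = 1} (fun _ => (1 : ℝ)) := by
      funext ω
      rcases hval t ω with h | h
      · rw [Set.indicator_of_notMem (by simp [Set.mem_setOf_eq, h]) _]; exact h
      · rw [Set.indicator_of_mem (by simpa [Set.mem_setOf_eq] using h) _]; exact h
    rw [heq, integral_indicator_const _ hset, smul_eq_mul, mul_one, measureReal_def, hP t]
  -- key computation: E[exp(s * (c * δ t))] = 1 + (exp(s*c) - 1) * p t
  have hmgf : ∀ (t : Fin T) (c : ℝ),
      ∫ ω, Real.exp (s * (c * δ t ω)) ∂P = 1 + (Real.exp (s * c) - 1) * p t := by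
    intro t c
    have heq : ∀ ω, Real.exp (s * (c * δ t ω)) = 1 + (Real.exp (s * c) - 1) * δ t ω := by
      intro ω
      rcases hval t ω with h | h <;> simp [h]
    simp_rw [heq]
    rw [integral_add (integrable_const 1) ((hδint t).const_mul _), integral_const,
      integral_const_mul, hδexp t]
    simp
  -- the coefficient vector for each data point
  set c : Fin N → Fin T → ℝ := fun n t => if t ∈ A n then α t else -(α t) with hc
  set Y : Fin N → Fin T → Ω → ℝ := fun n t ω => c n t * δ t ω with hY
  have hYmeas : ∀ n t, Measurable (Y n t) := fun n t => (hmeas t).const_mul _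
  have hYind : ∀ n, iIndepFun (Y n) P := by
    intro n
    exact hind.comp (fun t x => c n t * x) (fun t => measurable_const_mul _)
  have hYint : ∀ n t, Integrable (fun ω => Real.exp (s * Y n t ω)) P := by
    intro n t
    have heq : ∀ ω, Real.exp (s * Y n t ω) = 1 + (Real.exp (s * c n t) - 1) * δ t ω := by
      intro ω
      rcases hval t ω with h | h <;> simp [hY, h]
    simp_rw [heq]
    exact (integrable_const 1).add ((hδint t).const_mul _)
  -- sum decomposition
  have hsum : ∀ n ω, (∑ t ∈ A n, α t * δ t ω) - ∑ t ∈ B n, α t * δ t ω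
      = (∑ t, Y n t) ω := by
    intro n ω
    rw [Finset.sum_apply, ← hunion n, Finset.sum_union (hdisj n)]
    have hA : ∑ t ∈ A n, Y n t ω = ∑ t ∈ A n, α t * δ t ω :=
      Finset.sum_congr rfl fun t ht => by simp [hY, hc, ht]
    have hB : ∑ t ∈ B n, Y n t ω = -∑ t ∈ B n, α t * δ t ω := by
      rw [← Finset.sum_neg_distrib]
      refine Finset.sum_congr rfl fun t ht => ?_
      have : t ∉ A n := Finset.disjoint_right.mp (hdisj n) ht
      simp [hY, hc, this, neg_mul]
    rw [hA, hB]
    ring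
  -- per-point Chernoff bound
  set K : ℝ := Real.exp (∑ t, (Real.exp (s * α t) - 1) * p t) with hK
  have hpoint : ∀ n,
      (P {ω | γ n / 2 < ∑ t ∈ A n, α t * δ t ω - ∑ t ∈ B n, α t * δ t ω}).toReal
        ≤ Real.exp (-(s * γ n / 2)) * K := by
    intro n
    have hsub : {ω | γ n / 2 < ∑ t ∈ A n, α t * δ t ω - ∑ t ∈ B n, α t * δ t ω}
        ⊆ {ω | γ n / 2 ≤ (∑ t, Y n t) ω} := by
      intro ω hω
      simp only [Set.mem_setOf_eq] at hω ⊢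
      rw [← hsum n ω]
      exact hω.le
    have hcher := measure_ge_le_exp_mul_mgf (μ := P) (X := ∑ t, Y n t) (t := s)
      (γ n / 2) hs.le
      ((hYind n).integrable_exp_mul_sum (hYmeas n) (fun t _ => hYint n t))
    have hmono : (P {ω | γ n / 2 < ∑ t ∈ A n, α t * δ t ω - ∑ t ∈ B n, α t * δ t ω}).toReal
        ≤ (P {ω | γ n / 2 ≤ (∑ t, Y n t) ω}).toReal :=
      ENNReal.toReal_mono (measure_ne_top _ _) (measure_mono hsub)
    refine hmono.trans (hcher.trans ?_)
    have hexp_eq : -s * (γ n / 2) = -(s * γ n / 2) := by ring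
    rw [hexp_eq]
    refine mul_le_mul_of_nonneg_left ?_ (Real.exp_nonneg _)
    -- bound the mgf of the sum
    rw [(hYind n).mgf_sum (hYmeas n)]
    rw [hK, Real.exp_sum]
    refine Finset.prod_le_prod (fun t _ => mgf_nonneg) (fun t _ => ?_)
    have hval' : mgf (Y n t) P s = 1 + (Real.exp (s * c n t) - 1) * p t := hmgf t (c n t)
    rw [hval']
    by_cases ht : t ∈ A n
    · have hceq : c n t = α t := by simp [hc, ht]
      rw [hceq]
      have := Real.add_one_le_exp ((Real.exp (s * α t) - 1) * p t)
      linarith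
    · have hceq : c n t = -(α t) := by simp [hc, ht]
      rw [hceq]
      have h1 : Real.exp (s * -(α t)) ≤ 1 := by
        rw [Real.exp_le_one_iff]
        have : 0 ≤ s * α t := mul_nonneg hs.le (hα t)
        linarith
      have h2 : (Real.exp (s * -(α t)) - 1) * p t ≤ 0 :=
        mul_nonpos_of_nonpos_of_nonneg (by linarith) (hp0 t)
      have h3 : (1 : ℝ) ≤ Real.exp ((Real.exp (s * α t) - 1) * p t) := by
        refine Real.one_le_exp ?_
        have : (1 : ℝ) ≤ Real.exp (s * α t) := Real.one_le_exp (mul_nonneg hs.le (hα t))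
        exact mul_nonneg (by linarith) (hp0 t)
      linarith
  -- assemble
  calc (1 / (N : ℝ)) * ∑ n,
        (P {ω | γ n / 2 < ∑ t ∈ A n, α t * δ t ω - ∑ t ∈ B n, α t * δ t ω}).toReal
      ≤ (1 / (N : ℝ)) * ∑ n, Real.exp (-(s * γ n / 2)) * K := by
        refine mul_le_mul_of_nonneg_left (Finset.sum_le_sum fun n _ => hpoint n) ?_
        positivity
    _ = ((1 / (N : ℝ)) * ∑ n, Real.exp (-(s * γ n / 2))) * K := by
        rw [← Finset.sum_mul]; ring
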